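/- Let G be a finite simple graph, let γ be an automorphism of G, and let u ≠ u' be two vertices fixed by γ. Let P be a path from u to u' of minimal length (a shortest u–u' path). If no internal vertex of P is fixed by γ, then P and its image path γ(P) share no vertices other than u and u'. -/

import Mathlib

open SimpleGraph

/-- The permutation `γ` is an automorphism of the graph `G`. -/
def IsGraphAutomorphism {V : Type*} (G : SimpleGraph V) (γ : Equiv.Perm V) : Prop :=
  ∀ u v : V, G.Adj (γ u) (γ v) ↔ G.Adj u v

/-- The graph homomorphism `G →g G` induced by an adjacency-preserving permutation. -/
def permHom {V : Type*} (G : SimpleGraph V) (γ : Equiv.Perm V)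
    (hγ : IsGraphAutomorphism G γ) : G →g G :=
  ⟨γ, fun h => (hγ _ _).mpr h⟩

lemma getVert_map_aux {V V' : Type*} {G : SimpleGraph V} {G' : SimpleGraph V'}
    (f : G →g G') {u v : V} (p : G.Walk u v) (i : ℕ) :
    (p.map f).getVert i = f (p.getVert i) := by
  induction p generalizing i with
  | nil => simp [Walk.getVert]
  | cons h p ih =>
    cases i with
    | zero => simp
    | succ n => simpa [Walk.getVert_cons_succ] using ih n

theorem stmt9 {V : Type*} [Fintype V] (G : SimpleGraph V)
    (γ : Equiv.Perm V) (hγ : IsGraphAutomorphism G γ)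
    (u u' : V) (hne : u ≠ u') (hu : γ u = u) (hu' : γ u' = u')
    (P : G.Path u u')
    (hmin : ∀ Q : G.Path u u', P.val.length ≤ Q.val.length)
    (hfix : ∀ w ∈ P.val.support, w ≠ u → w ≠ u' → γ w ≠ w) :
    ∀ w ∈ P.val.support, w ∈ ((P.val.map (permHom G γ hγ)).support) →
      w = u ∨ w = u' := by
  classical
  intro w hwP hwQ
  by_contra hcon
  push_neg at hcon
  obtain ⟨hw1, hw2⟩ := hcon
  set f := permHom G γ hγ with hf
  set W := P.val with hW
  set Q' := (W.map f).copy (show f u = u from hu) (show f u' = u' from hu') with hQdef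
  have hQ' : w ∈ Q'.support := by simpa [hQdef] using hwQ
  have hmin' : ∀ R : G.Walk u u', W.length ≤ R.length := fun R =>
    le_trans (hmin ⟨R.bypass, R.bypass_isPath⟩) R.length_bypass_le
  have hsum1 : (W.takeUntil w hwP).length + (W.dropUntil w hwP).length = W.length := by
    rw [← Walk.length_append, Walk.take_spec]
  have hsum2 : (Q'.takeUntil w hQ').length + (Q'.dropUntil w hQ').length = W.length := by
    rw [← Walk.length_append, Walk.take_spec]
    simp [hQdef]
  have h1 := hmin' ((W.takeUntil w hwP).append (Q'.dropUntil w hQ'))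
  have h2 := hmin' ((Q'.takeUntil w hQ').append (W.dropUntil w hwP))
  rw [Walk.length_append] at h1 h2
  have heq : (W.takeUntil w hwP).length = (Q'.takeUntil w hQ').length := by omega
  have g1 : W.getVert (W.takeUntil w hwP).length = w := by
    have := congrArg (fun p : G.Walk u u' => p.getVert (W.takeUntil w hwP).length)
      (W.take_spec hwP)
    simp only [Walk.getVert_append, lt_self_iff_false, if_false, Nat.sub_self,
      Walk.getVert_zero] at this
    exact this.symm
  have g2 : Q'.getVert (Q'.takeUntil w hQ').length = w := by
    have := congrArg (fun p : G.Walk u u' => p.getVert (Q'.takeUntil w hQ').length)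
      (Q'.take_spec hQ')
    simp only [Walk.getVert_append, lt_self_iff_false, if_false, Nat.sub_self,
      Walk.getVert_zero] at this
    exact this.symm
  have g3 : Q'.getVert (Q'.takeUntil w hQ').length
      = γ (W.getVert (W.takeUntil w hwP).length) := by
    rw [← heq, hQdef, Walk.getVert_copy, getVert_map_aux]
    rfl
  have gfinal : γ w = w := by
    rw [← g1, ← g3, g2, g1]
  exact hfix w hwP hw1 hw2 gfinal
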